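/- Let ψ : [0,1] → ℂ be continuously differentiable. Then there is a constant C (depending only on ψ) such that for every α ∈ (0,1), every r ≥ 1, every μ ∈ [0,1], and each choice of sign ±, one has | ∫₀^α e^{± i r w²} ψ(w) dw | ≤ C · α^μ · r^{-(1-μ)/2}. -/

import Mathlib

open intervalIntegral

set_option maxHeartbeats 1000000 in
/-- Let `ψ` be `C¹` on `[0,1]`.  There is a constant `C` (depending
only on `ψ`) such that for every `α ∈ (0,1)`, `r ≥ 1`, `μ ∈ [0,1]` and both signs,
`|∫₀^α e^{± i r w²} ψ(w) dw| ≤ C α^μ r^{-(1-μ)/2}`. -/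
theorem short_oscillatory_interpolated_estimate (ψ : ℝ → ℂ)
    (hψ : ContDiffOn ℝ 1 ψ (Set.Icc 0 1)) :
    ∃ C : ℝ, ∀ α ∈ Set.Ioo (0 : ℝ) 1, ∀ r : ℝ, 1 ≤ r → ∀ μ ∈ Set.Icc (0 : ℝ) 1,
      ∀ ε : ℝ, (ε = 1 ∨ ε = -1) →
      ‖∫ w in (0 : ℝ)..α, Complex.exp ((ε : ℂ) * Complex.I * (r : ℂ) * (w : ℂ) ^ 2) * ψ w‖ ≤
        C * α ^ μ * r ^ (-(1 - μ) / 2) := by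
  obtain ⟨M, hM⟩ := isCompact_Icc.exists_bound_of_continuousOn hψ.continuousOn
  have hψ' : ContinuousOn (derivWithin ψ (Set.Icc 0 1)) (Set.Icc 0 1) :=
    hψ.continuousOn_derivWithin (uniqueDiffOn_Icc one_pos) le_rfl
  obtain ⟨M', hM'⟩ := isCompact_Icc.exists_bound_of_continuousOn hψ'
  have hM0 : 0 ≤ M := le_trans (norm_nonneg _) (hM 0 (by norm_num))
  have hM'0 : 0 ≤ M' := le_trans (norm_nonneg _) (hM' 0 (by norm_num))
  refine ⟨3 * M + M', ?_⟩
  rintro α ⟨hα0, hα1⟩ r hr μ ⟨hμ0, hμ1⟩ ε hε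
  have hr0 : (0:ℝ) < r := lt_of_lt_of_le one_pos hr
  set f : ℝ → ℂ := fun w => Complex.exp ((ε : ℂ) * Complex.I * (r : ℂ) * (w : ℂ) ^ 2) * ψ w with hf
  -- norm of the exponential is 1
  have hexp1 : ∀ w : ℝ, ‖Complex.exp ((ε : ℂ) * Complex.I * (r : ℂ) * (w : ℂ) ^ 2)‖ = 1 := by
    intro w
    rw [Complex.norm_exp]
    have : ((ε:ℂ) * Complex.I * r * (w:ℂ)^2).re = 0 := by simp [← Complex.ofReal_pow]
    rw [this, Real.exp_zero]
  have hfb : ∀ w ∈ Set.Icc (0:ℝ) 1, ‖f w‖ ≤ M := by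
    intro w hw
    rw [hf]; simp only [norm_mul, hexp1, one_mul]
    exact hM w hw
  -- continuity of f on Icc 0 1
  have hcont : ContinuousOn f (Set.Icc 0 1) := by
    apply ContinuousOn.mul _ hψ.continuousOn
    exact (Complex.continuous_exp.comp (by continuity)).continuousOn
  -- trivial bound
  have triv : ∀ β ∈ Set.Ioc (0:ℝ) 1, ‖∫ w in (0:ℝ)..β, f w‖ ≤ M * β := by
    intro β hβ
    have := intervalIntegral.norm_integral_le_of_norm_le_const (C := M) (a := (0:ℝ)) (b := β)
      (f := f) ?_
    · rwa [sub_zero, abs_of_pos hβ.1] at this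
    · intro x hx
      rw [Set.uIoc_of_le (le_of_lt hβ.1)] at hx
      exact hfb x ⟨le_of_lt hx.1, le_trans hx.2 hβ.2⟩
  -- derivative facts
  have hd : ∀ w ∈ Set.Ioo (0:ℝ) 1, HasDerivAt ψ (deriv ψ w) w := fun w hw =>
    ((hψ.contDiffAt (Icc_mem_nhds hw.1 hw.2)).differentiableAt one_ne_zero).hasDerivAt
  have hdb : ∀ w ∈ Set.Ioo (0:ℝ) 1, ‖deriv ψ w‖ ≤ M' := by
    intro w hw
    rw [← derivWithin_of_mem_nhds (Icc_mem_nhds hw.1 hw.2)]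
    exact hM' w (Set.mem_Icc_of_Ioo hw)
  have hdc : ContinuousOn (deriv ψ) (Set.Ioo 0 1) := by
    refine (hψ'.mono Set.Ioo_subset_Icc_self).congr fun w hw => ?_
    exact (derivWithin_of_mem_nhds (Icc_mem_nhds hw.1 hw.2)).symm
  -- the key quantity δ
  set δ : ℝ := r ^ (-(1:ℝ)/2) with hδ
  have hδ0 : 0 < δ := Real.rpow_pos_of_pos hr0 _
  have hδ1 : δ ≤ 1 := Real.rpow_le_one_of_one_le_of_nonpos hr (by norm_num)
  have hδinv : δ⁻¹ = r ^ ((1:ℝ)/2) := by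
    rw [hδ, ← Real.rpow_neg_one, ← Real.rpow_mul (le_of_lt hr0)]
    norm_num
  have hrδ : r * δ = δ⁻¹ := by
    have h := Real.rpow_add hr0 1 (-1/2)
    rw [Real.rpow_one] at h
    rw [hδ, hδinv, ← h]
    norm_num
  have hδδ : δ⁻¹ / r = δ := by
    rw [← hrδ, mul_comm, mul_div_assoc, div_self (ne_of_gt hr0), mul_one]
  have h1 : δ * δ * r = 1 := by
    rw [mul_assoc, mul_comm δ r, hrδ, mul_inv_cancel₀ (ne_of_gt hδ0)]
  -- oscillatory bound
  have osc : ‖∫ w in (0:ℝ)..α, f w‖ ≤ (3 * M + M') * δ := by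
    by_cases hαδ : α ≤ δ
    · calc ‖∫ w in (0:ℝ)..α, f w‖ ≤ M * α := triv α ⟨hα0, le_of_lt hα1⟩
        _ ≤ (3 * M + M') * δ := by nlinarith
    · push_neg at hαδ
      set c : ℂ := (ε:ℂ) * Complex.I * r with hc
      have hcnorm : ‖(2:ℂ) * c‖ = 2 * r := by
        rcases hε with h | h <;> subst h <;>
          simp [hc, norm_mul, Complex.norm_real, _root_.abs_of_nonneg (le_of_lt hr0)]
      have hc0 : c ≠ 0 := by
        intro h
        rw [h, mul_zero, norm_zero] at hcnorm
        linarith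
      have hsub : Set.Icc δ α ⊆ Set.Ioo 0 1 := fun x hx =>
        ⟨lt_of_lt_of_le hδ0 hx.1, lt_of_le_of_lt hx.2 hα1⟩
      have hsub' : Set.Icc δ α ⊆ Set.Icc 0 1 := hsub.trans Set.Ioo_subset_Icc_self
      have hδα : δ ≤ α := le_of_lt hαδ
      -- integration by parts setup
      have hu : ∀ x ∈ Set.uIcc δ α, HasDerivAt (fun w : ℝ => ψ w / (w:ℂ))
          ((deriv ψ x * (x:ℂ) - ψ x) / (x:ℂ)^2) x := by
        intro x hx
        rw [Set.uIcc_of_le hδα] at hx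
        have hx' := hsub hx
        have hx0 : ((x:ℝ):ℂ) ≠ 0 := Complex.ofReal_ne_zero.2 (ne_of_gt hx'.1)
        have hid : HasDerivAt (fun w : ℝ => (w:ℂ)) 1 x := by
          simpa using (hasDerivAt_id x).ofReal_comp
        have h := (hd x hx').div hid hx0
        simp only [mul_one] at h
        exact h
      have hv : ∀ x ∈ Set.uIcc δ α, HasDerivAt
          (fun w : ℝ => Complex.exp (c * (w:ℂ)^2) / (2 * c))
          ((x:ℂ) * Complex.exp (c * (x:ℂ)^2)) x := by
        intro x _
        have h2 : HasDerivAt (fun w : ℝ => ((w:ℂ)^2)) (2*(x:ℂ)) x := by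
          simpa using (hasDerivAt_pow 2 x).ofReal_comp
        have h3 := ((h2.const_mul c).cexp).div_const (2 * c)
        refine h3.congr_deriv ?_
        rw [div_eq_iff (mul_ne_zero two_ne_zero hc0)]
        ring
      have hcd : ContinuousOn (fun w : ℝ => deriv ψ w * (w:ℂ) - ψ w) (Set.Icc δ α) :=
        ((hdc.mono hsub).mul (Complex.continuous_ofReal.continuousOn)).sub
          (hψ.continuousOn.mono hsub')
      have hu'i : IntervalIntegrable (fun w : ℝ => (deriv ψ w * (w:ℂ) - ψ w) / (w:ℂ)^2)
          MeasureTheory.volume δ α := by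
        apply ContinuousOn.intervalIntegrable
        rw [Set.uIcc_of_le hδα]
        apply hcd.div ((Complex.continuous_ofReal.pow 2).continuousOn)
        intro x hx
        exact pow_ne_zero 2 (Complex.ofReal_ne_zero.2 (ne_of_gt (hsub hx).1))
      have hv'i : IntervalIntegrable (fun w : ℝ => (w:ℂ) * Complex.exp (c * (w:ℂ)^2))
          MeasureTheory.volume δ α := by
        apply Continuous.intervalIntegrable
        exact Complex.continuous_ofReal.mul (Complex.continuous_exp.comp (by continuity))
      have ibp := intervalIntegral.integral_mul_deriv_eq_deriv_mul hu hv hu'i hv'i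
      have heq : (∫ w in δ..α, f w) =
          ∫ w in δ..α, (ψ w / (w:ℂ)) * ((w:ℂ) * Complex.exp (c * (w:ℂ)^2)) := by
        apply intervalIntegral.integral_congr
        intro w hw
        rw [Set.uIcc_of_le hδα] at hw
        have hw0 : ((w:ℝ):ℂ) ≠ 0 := Complex.ofReal_ne_zero.2 (ne_of_gt (hsub hw).1)
        show Complex.exp (c * (w:ℂ)^2) * ψ w =
          ψ w / (w:ℂ) * ((w:ℂ) * Complex.exp (c * (w:ℂ)^2))
        rw [div_mul_eq_mul_div, mul_left_comm, mul_div_cancel_left₀ _ hw0]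
        exact mul_comm _ _
      -- split the integral
      have h0δi : IntervalIntegrable f MeasureTheory.volume 0 δ := by
        apply ContinuousOn.intervalIntegrable
        apply hcont.mono
        rw [Set.uIcc_of_le (le_of_lt hδ0)]
        exact Set.Icc_subset_Icc le_rfl hδ1
      have hδαi : IntervalIntegrable f MeasureTheory.volume δ α := by
        apply ContinuousOn.intervalIntegrable
        apply hcont.mono
        rw [Set.uIcc_of_le hδα]
        exact hsub'
      have hsplit : (∫ w in (0:ℝ)..α, f w) = (∫ w in (0:ℝ)..δ, f w) + ∫ w in δ..α, f w :=
        (intervalIntegral.integral_add_adjacent_intervals h0δi hδαi).symm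
      -- norm of v
      have hvnorm : ∀ w : ℝ, ‖Complex.exp (c * (w:ℂ)^2) / (2 * c)‖ = 1 / (2 * r) := by
        intro w
        rw [norm_div, hcnorm, hexp1 w]
      -- boundary terms
      have hbdry : ∀ β : ℝ, δ ≤ β → β ≤ 1 →
          ‖ψ β / (β:ℂ) * (Complex.exp (c * (β:ℂ)^2) / (2 * c))‖ ≤ M / δ * (1 / (2 * r)) := by
        intro β hβ1 hβ2
        rw [norm_mul, hvnorm]
        have hβ0 : 0 < β := lt_of_lt_of_le hδ0 hβ1
        have : ‖ψ β / (β:ℂ)‖ ≤ M / δ := by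
          rw [norm_div, Complex.norm_real, Real.norm_eq_abs, _root_.abs_of_pos hβ0]
          exact div_le_div₀ hM0 (hM β ⟨le_of_lt hβ0, hβ2⟩) hδ0 hβ1
        exact mul_le_mul_of_nonneg_right this (by positivity)
      -- the integral term
      set g : ℝ → ℝ := fun w => (M' * (1/w) + M * ((w^2)⁻¹)) / (2 * r) with hg
      have h0ni : (0:ℝ) ∉ Set.uIcc δ α := by
        rw [Set.uIcc_of_le hδα]
        intro h
        exact absurd h.1 (not_le.2 hδ0)
      have hkey : ∀ w ∈ Set.Ioc δ α,
          ‖(deriv ψ w * (w:ℂ) - ψ w) / (w:ℂ)^2 * (Complex.exp (c * (w:ℂ)^2) / (2 * c))‖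
            ≤ g w := by
        intro w hw
        have hw' : w ∈ Set.Icc δ α := ⟨le_of_lt hw.1, hw.2⟩
        have hw0 : 0 < w := lt_of_lt_of_le hδ0 hw'.1
        rw [norm_mul, hvnorm, hg]
        have hnum : ‖(deriv ψ w * (w:ℂ) - ψ w) / (w:ℂ)^2‖ ≤ M' * (1/w) + M * ((w^2)⁻¹) := by
          rw [norm_div, ← Complex.ofReal_pow, Complex.norm_real, Real.norm_eq_abs,
            _root_.abs_of_pos (by positivity)]
          have : ‖deriv ψ w * (w:ℂ) - ψ w‖ ≤ M' * w + M := by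
            refine (norm_sub_le _ _).trans (add_le_add ?_ (hM w (hsub' hw')))
            rw [norm_mul, Complex.norm_real, Real.norm_eq_abs, _root_.abs_of_pos hw0]
            exact mul_le_mul_of_nonneg_right (hdb w (hsub hw')) (le_of_lt hw0)
          calc ‖deriv ψ w * (w:ℂ) - ψ w‖ / w ^ 2 ≤ (M' * w + M) / w ^ 2 :=
                (div_le_div_iff_of_pos_right (by positivity)).2 this
            _ = M' * (1/w) + M * ((w^2)⁻¹) := by field_simp
        calc ‖(deriv ψ w * (w:ℂ) - ψ w) / (w:ℂ)^2‖ * (1 / (2*r))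
            ≤ (M' * (1/w) + M * ((w^2)⁻¹)) * (1 / (2*r)) :=
              mul_le_mul_of_nonneg_right hnum (by positivity)
          _ = (M' * (1/w) + M * ((w^2)⁻¹)) / (2 * r) := by ring
      have hgi : IntervalIntegrable g MeasureTheory.volume δ α := by
        apply ContinuousOn.intervalIntegrable
        rw [Set.uIcc_of_le hδα]
        apply ContinuousOn.div_const
        apply ContinuousOn.add
        · exact continuousOn_const.mul (continuousOn_const.div continuousOn_id
            (fun x hx => ne_of_gt (lt_of_lt_of_le hδ0 hx.1)))
        · exact continuousOn_const.mul ((continuousOn_id.pow 2).inv₀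
            (fun x hx => pow_ne_zero 2 (ne_of_gt (lt_of_lt_of_le hδ0 hx.1))))
      have hintb : ‖∫ w in δ..α,
          (deriv ψ w * (w:ℂ) - ψ w) / (w:ℂ)^2 * (Complex.exp (c * (w:ℂ)^2) / (2 * c))‖
          ≤ |∫ w in δ..α, g w| := by
        apply intervalIntegral.norm_integral_le_abs_of_norm_le _ hgi
        filter_upwards [MeasureTheory.ae_restrict_mem measurableSet_uIoc] with t ht
        rw [Set.uIoc_of_le hδα] at ht
        exact hkey t ht
      have I2 : (∫ w in δ..α, ((w:ℝ)^2)⁻¹) = δ⁻¹ - α⁻¹ := by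
        have e2 : (∫ w in δ..α, ((w:ℝ)^2)⁻¹) = ∫ w in δ..α, (w:ℝ)^(-2:ℤ) := by
          apply intervalIntegral.integral_congr
          intro x _
          show ((x:ℝ)^2)⁻¹ = (x:ℝ)^(-2:ℤ)
          rw [zpow_neg]
          norm_cast
        rw [e2, integral_zpow (Or.inr ⟨by norm_num, h0ni⟩)]
        norm_num
        ring
      have Ig : (∫ w in δ..α, g w) =
          (M' * Real.log (α/δ) + M * (δ⁻¹ - α⁻¹)) / (2 * r) := by
        rw [hg]
        rw [intervalIntegral.integral_div]
        congr 1
        have ha : IntervalIntegrable (fun w : ℝ => M' * (1/w)) MeasureTheory.volume δ α :=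
          ContinuousOn.intervalIntegrable (continuousOn_const.mul
            (continuousOn_const.div continuousOn_id
            (fun x hx => ne_of_gt (lt_of_lt_of_le hδ0 (by
              rw [Set.uIcc_of_le hδα] at hx; exact hx.1)))))
        have hb : IntervalIntegrable (fun w : ℝ => M * ((w^2)⁻¹)) MeasureTheory.volume δ α :=
          ContinuousOn.intervalIntegrable (continuousOn_const.mul ((continuousOn_id.pow 2).inv₀
            (fun x hx => pow_ne_zero 2 (ne_of_gt (lt_of_lt_of_le hδ0 (by
              rw [Set.uIcc_of_le hδα] at hx; exact hx.1))))))
        rw [intervalIntegral.integral_add ha hb, intervalIntegral.integral_const_mul,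
          intervalIntegral.integral_const_mul, integral_one_div h0ni, I2]
      have hlog : Real.log (α/δ) ≤ δ⁻¹ := by
        have ha1 : α/δ ≤ δ⁻¹ := by
          rw [div_le_iff₀ hδ0, inv_mul_cancel₀ (ne_of_gt hδ0)]
          exact le_of_lt hα1
        calc Real.log (α/δ) ≤ Real.log δ⁻¹ := Real.log_le_log (by positivity) ha1
          _ ≤ δ⁻¹ - 1 := Real.log_le_sub_one_of_pos (by positivity)
          _ ≤ δ⁻¹ := by linarith
      have hIval : (M' * Real.log (α/δ) + M * (δ⁻¹ - α⁻¹)) / (2*r) ≤ (M' + M) * δ / 2 := by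
        have hstep : M' * Real.log (α/δ) + M * (δ⁻¹ - α⁻¹) ≤ M' * δ⁻¹ + M * δ⁻¹ := by
          have hαinv : (0:ℝ) ≤ α⁻¹ := by positivity
          have := mul_le_mul_of_nonneg_left hlog hM'0
          nlinarith
        calc (M' * Real.log (α/δ) + M * (δ⁻¹ - α⁻¹)) / (2*r)
            ≤ (M' * δ⁻¹ + M * δ⁻¹) / (2*r) :=
              (div_le_div_iff_of_pos_right (by positivity)).2 hstep
          _ = (M' + M) * (δ⁻¹ / r) / 2 := by ring
          _ = (M' + M) * δ / 2 := by rw [hδδ]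
      have e1 : M / δ * (1/(2*r)) = M * δ / 2 := by
        rw [show M / δ * (1/(2*r)) = M * (δ⁻¹ / r) / 2 by ring, hδδ]
      have hosc2 : ‖∫ w in δ..α, f w‖ ≤ (2*M + M') * δ := by
        rw [heq, ibp]
        have hnn : (0:ℝ) ≤ (M' * Real.log (α/δ) + M * (δ⁻¹ - α⁻¹)) / (2 * r) := by
          have hl0 : (0:ℝ) ≤ Real.log (α/δ) :=
            Real.log_nonneg ((one_le_div hδ0).2 hδα)
          have hinv : α⁻¹ ≤ δ⁻¹ := by
            apply inv_anti₀ hδ0 hδα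
          have h4 : (0:ℝ) ≤ M' * Real.log (α/δ) := mul_nonneg hM'0 hl0
          have h5 : (0:ℝ) ≤ M * (δ⁻¹ - α⁻¹) := mul_nonneg hM0 (by linarith)
          have h6 : (0:ℝ) < 2 * r := by linarith
          positivity
        have t3 : ‖∫ w in δ..α,
            (deriv ψ w * (w:ℂ) - ψ w) / (w:ℂ)^2 * (Complex.exp (c * (w:ℂ)^2) / (2 * c))‖
            ≤ (M' + M) * δ / 2 := by
          refine hintb.trans ?_
          rw [Ig, abs_of_nonneg hnn]
          exact hIval
        calc ‖ψ α / (α:ℂ) * (Complex.exp (c * (α:ℂ)^2) / (2*c))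
              - ψ δ / (δ:ℂ) * (Complex.exp (c * (δ:ℂ)^2) / (2*c))
              - ∫ w in δ..α,
                (deriv ψ w * (w:ℂ) - ψ w) / (w:ℂ)^2 * (Complex.exp (c * (w:ℂ)^2) / (2 * c))‖
            ≤ ‖ψ α / (α:ℂ) * (Complex.exp (c * (α:ℂ)^2) / (2*c))‖
              + ‖ψ δ / (δ:ℂ) * (Complex.exp (c * (δ:ℂ)^2) / (2*c))‖
              + ‖∫ w in δ..α,
                (deriv ψ w * (w:ℂ) - ψ w) / (w:ℂ)^2 * (Complex.exp (c * (w:ℂ)^2) / (2 * c))‖ :=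
              (norm_sub_le _ _).trans (add_le_add_left (norm_sub_le _ _) _)
          _ ≤ M / δ * (1/(2*r)) + M / δ * (1/(2*r)) + (M' + M) * δ / 2 :=
              add_le_add (add_le_add (hbdry α hδα (le_of_lt hα1)) (hbdry δ le_rfl hδ1)) t3
          _ = M * δ / 2 + M * δ / 2 + (M' + M) * δ / 2 := by rw [e1]
          _ ≤ (2*M + M') * δ := by nlinarith
      rw [hsplit]
      calc ‖(∫ w in (0:ℝ)..δ, f w) + ∫ w in δ..α, f w‖
          ≤ ‖∫ w in (0:ℝ)..δ, f w‖ + ‖∫ w in δ..α, f w‖ := norm_add_le _ _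
        _ ≤ M * δ + (2*M + M') * δ := add_le_add (triv δ ⟨hδ0, hδ1⟩) hosc2
        _ = (3*M + M') * δ := by ring
  -- interpolation
  have tb : ‖∫ w in (0:ℝ)..α, f w‖ ≤ M * α := triv α ⟨hα0, le_of_lt hα1⟩
  have hC0 : (0:ℝ) ≤ 3 * M + M' := by linarith
  have both : ‖∫ w in (0:ℝ)..α, f w‖ ≤ (3*M+M') * min α δ := by
    rcases le_total α δ with h | h
    · rw [min_eq_left h]
      exact tb.trans (by nlinarith)
    · rw [min_eq_right h]
      exact osc
  have hm0 : 0 < min α δ := lt_min hα0 hδ0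
  have hmin : min α δ ≤ α ^ μ * δ ^ (1-μ) := by
    have e : min α δ = (min α δ) ^ μ * (min α δ) ^ (1-μ) := by
      rw [← Real.rpow_add hm0]
      norm_num
    rw [e]
    exact mul_le_mul (Real.rpow_le_rpow hm0.le (min_le_left _ _) hμ0)
      (Real.rpow_le_rpow hm0.le (min_le_right _ _) (by linarith))
      (Real.rpow_nonneg hm0.le _) (Real.rpow_nonneg (le_of_lt hα0) _)
  have hδμ : δ ^ (1-μ) = r ^ (-(1-μ)/2) := by
    rw [hδ, show -(1-μ)/2 = (-1/2) * (1-μ) by ring, Real.rpow_mul (le_of_lt hr0)]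
  calc ‖∫ w in (0:ℝ)..α, f w‖ ≤ (3*M+M') * min α δ := both
    _ ≤ (3*M+M') * (α ^ μ * δ ^ (1-μ)) := mul_le_mul_of_nonneg_left hmin hC0
    _ = (3*M+M') * α ^ μ * r ^ (-(1-μ)/2) := by rw [hδμ]; ring
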